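/- Let ρ_j = ρ₀·2^{−j}, K_j defined by e^{−K_j ρ_j} = E_j where E_{j+1} = c̃·E_j^{3/2} with c̃ ≥ 1 and 0 < E₀ < 1. Then K_{j+1}/K_j = (2 ln c̃ + 3 ln E_j)/ln E_j, and if E_j ≤ c̃^{−2} for all j this ratio is at most 3; hence setting F_j = 2^{j+3} K_j^{τ+1} ε_j/r_j with ε_j = E_j α_j r_j ρ_j^{τ'} and α_j ≤ α, one has F_{j+1} ≤ c·E_j^{1/2}·F_j, so that if E₀ is sufficiently small then F_j ≤ α for all j ≥ 0. -/

import Mathlib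

set_option maxHeartbeats 1000000 in
/-- KAM smallness bookkeeping. With ρ_j = ρ₀2^{−j}, e^{−K_jρ_j} = E_j,
E_{j+1} = c̃E_j^{3/2}, α_j = (1−2^{−(j+2)})α, ε_j = E_jα_jr_jρ_j^{τ'} and
F_j = 2^{j+3}K_j^{τ+1}ε_j/r_j: the ratio K_{j+1}/K_j equals
(2 ln c̃ + 3 ln E_j)/ln E_j and (when E_j ≤ c̃⁻² for all j) is at most 3; moreover there
are constants c > 0 and a threshold E₀max > 0 such that F_{j+1} ≤ cE_j^{1/2}F_j and,
if E₀ ≤ E₀max, F_j ≤ α for all j. -/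
theorem stmt18 (τ τ' α ρ₀ ctil : ℝ) (hρ₀ : 0 < ρ₀) (hτ : 0 < τ) (hτ' : 0 < τ')
    (hα : 0 < α) (hα1 : α < 1) (hctil : 1 ≤ ctil) :
    ∃ c > 0, ∃ E₀max > 0,
      ∀ (E ρ K r αseq ε F : ℕ → ℝ),
        (0 < E 0) → (E 0 < 1) →
        (∀ j, E (j + 1) = ctil * E j ^ ((3 : ℝ) / 2)) →
        (∀ j, ρ j = ρ₀ * 2 ^ (-(j : ℝ))) →
        (∀ j, Real.exp (-(K j * ρ j)) = E j) →
        (∀ j, 0 < r j) →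
        (∀ j, αseq j = (1 - 2 ^ (-((j : ℝ) + 2))) * α) →
        (∀ j, ε j = E j * αseq j * r j * ρ j ^ τ') →
        (∀ j, F j = 2 ^ ((j : ℝ) + 3) * K j ^ (τ + 1) * ε j / r j) →
        ((∀ j, E j ≠ 1 →
            K (j + 1) / K j
              = (2 * Real.log ctil + 3 * Real.log (E j)) / Real.log (E j)) ∧
         ((∀ j, E j ≤ ctil⁻¹ ^ 2) →
            (∀ j, K (j + 1) / K j ≤ 3) ∧
            (∀ j, F (j + 1) ≤ c * E j ^ ((1 : ℝ) / 2) * F j) ∧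
            (E 0 ≤ E₀max → ∀ j, F j ≤ α))) := by
  have hctil0 : (0:ℝ) < ctil := by linarith
  have hτ1 : (0:ℝ) < τ + 1 := by linarith
  obtain ⟨s, hsdef⟩ : ∃ s : ℝ, s = 1 / (2 * (τ + 1)) := ⟨_, rfl⟩
  have hspos : 0 < s := by rw [hsdef]; positivity
  have hsval : s * (τ + 1) = 1 / 2 := by rw [hsdef]; field_simp
  obtain ⟨c, hcdef⟩ : ∃ c : ℝ, c = 8 / 3 * 3 ^ (τ + 1) * ctil := ⟨_, rfl⟩
  have h3pow : (1:ℝ) ≤ 3 ^ (τ + 1) := Real.one_le_rpow (by norm_num) hτ1.le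
  have hcpos : (0:ℝ) < c := by rw [hcdef]; positivity
  have hc1 : (1:ℝ) ≤ c := by rw [hcdef]; nlinarith
  obtain ⟨D, hDdef⟩ : ∃ D : ℝ, D = 1 / 6 * s ^ (τ + 1) * ρ₀ ^ (τ + 1 - τ') := ⟨_, rfl⟩
  have hDpos : 0 < D := by rw [hDdef]; positivity
  refine ⟨c, hcpos, min ((1 / c) ^ 2) (D ^ 2), by positivity, ?_⟩
  intro E ρ K r αseq ε F hE0 hE01 hErec hρ hKexp hr hαs hε hF
  have hEpos : ∀ j, 0 < E j := fun j => (hKexp j) ▸ Real.exp_pos _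
  have hρpos : ∀ j, 0 < ρ j := fun j => by rw [hρ]; positivity
  have hlogE : ∀ j, Real.log (E j) = -(K j * ρ j) := fun j => by
    rw [← hKexp j, Real.log_exp]
  have hKval : ∀ j, K j = -Real.log (E j) / ρ j := fun j => by
    rw [hlogE j]; field_simp [(hρpos j).ne']
  have hρhalf : ∀ j, ρ (j + 1) = ρ j / 2 := fun j => by
    rw [hρ, hρ]
    push_cast
    rw [show -((j:ℝ) + 1) = -(j:ℝ) + (-1) by ring, Real.rpow_add (by norm_num : (0:ℝ) < 2),
      Real.rpow_neg_one]
    ring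
  have hlogrec : ∀ j, Real.log (E (j + 1)) = Real.log ctil + 3 / 2 * Real.log (E j) := fun j => by
    rw [hErec j, Real.log_mul hctil0.ne' (Real.rpow_pos_of_pos (hEpos j) _).ne',
      Real.log_rpow (hEpos j)]
  have hE32 : ∀ j, E j ^ ((3:ℝ) / 2) = E j ^ ((1:ℝ) / 2) * E j := fun j => by
    rw [show (3:ℝ)/2 = 1/2 + 1 by norm_num, Real.rpow_add (hEpos j), Real.rpow_one]
  have hFval : ∀ j, F j = 2 ^ ((j:ℝ) + 3) * K j ^ (τ + 1) * (E j * αseq j * ρ j ^ τ') :=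
    fun j => by
      rw [hF, hε]; field_simp [(hr j).ne']
  have h2pow : ∀ j : ℕ, (2:ℝ) ^ (-((j:ℝ) + 2)) ≤ 1 / 4 := fun j => by
    have h1 : (2:ℝ) ^ (-((j:ℝ) + 2)) ≤ 2 ^ (-(2:ℝ)) := by
      apply Real.rpow_le_rpow_of_exponent_le (by norm_num)
      have : (0:ℝ) ≤ (j:ℝ) := Nat.cast_nonneg j
      linarith
    have h2 : (2:ℝ) ^ (-(2:ℝ)) = 1 / 4 := by
      rw [show (-(2:ℝ)) = ((-2 : ℤ) : ℝ) by norm_num, Real.rpow_intCast]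
      norm_num
    exact h1.trans_eq h2
  have h2powpos : ∀ x : ℝ, (0:ℝ) < 2 ^ x := fun x => Real.rpow_pos_of_pos (by norm_num) x
  have hαpos : ∀ j, 0 < αseq j := fun j => by
    rw [hαs]
    have := h2pow j
    nlinarith
  constructor
  · -- ratio identity
    intro j hEne
    have ha : Real.log (E j) ≠ 0 := Real.log_ne_zero_of_pos_of_ne_one (hEpos j) hEne
    have hpj : (ρ j) ≠ 0 := (hρpos j).ne'
    rw [hKval (j+1), hKval j, hρhalf j, hlogrec j]
    have hstep : -(Real.log ctil + 3 / 2 * Real.log (E j)) / (ρ j / 2)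
        = -(2 * Real.log ctil + 3 * Real.log (E j)) / ρ j := by
      field_simp
    rw [hstep, div_div_div_comm, div_self hpj, div_one, neg_div_neg_eq]
  · intro hsmall
    have hinv0 : (0:ℝ) ≤ ctil⁻¹ := by positivity
    have hinv1 : ctil⁻¹ ≤ 1 := by
      rw [inv_le_one_iff₀]; right; exact hctil
    have hE1 : ∀ j, E j ≤ 1 := fun j => (hsmall j).trans (by nlinarith)
    have hlognp : ∀ j, Real.log (E j) ≤ 0 := fun j => Real.log_nonpos (hEpos j).le (hE1 j)
    have hKnn : ∀ j, 0 ≤ K j := fun j => by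
      rw [hKval j]
      exact div_nonneg (by linarith [hlognp j]) (hρpos j).le
    have hlogc : ∀ j, Real.log (E j) ≤ -(2 * Real.log ctil) := fun j => by
      have h1 := Real.log_le_log (hEpos j) (hsmall j)
      rw [Real.log_pow, Real.log_inv] at h1
      push_cast at h1
      linarith
    have hlc : 0 ≤ Real.log ctil := Real.log_nonneg hctil
    have hK3 : ∀ j, K (j + 1) ≤ 3 * K j := fun j => by
      have hp := hρpos j
      have h3K : 3 * K j = -(3 * Real.log (E j)) / ρ j := by rw [hKval j]; ring
      rw [hKval (j+1), hρhalf j, hlogrec j, h3K]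
      rw [div_le_div_iff₀ (by linarith) hp]
      nlinarith [mul_nonneg hlc hp.le]
    have hαratio : ∀ j, αseq (j + 1) ≤ 4 / 3 * αseq j := fun j => by
      rw [hαs, hαs]
      push_cast
      have h1 : (0:ℝ) < 2 ^ (-((j:ℝ) + 1 + 2)) := h2powpos _
      have h2 := h2pow j
      nlinarith
    have hFstep : ∀ j, F (j + 1) ≤ c * E j ^ ((1:ℝ) / 2) * F j := by
      intro j
      have hEj := hEpos j
      have hKj := hKnn j
      have hKj1 := hKnn (j + 1)
      have hαj := (hαpos j).le
      have hαj1 := (hαpos (j + 1)).le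
      have hK1 : K (j + 1) ^ (τ + 1) ≤ 3 ^ (τ + 1) * K j ^ (τ + 1) := by
        calc K (j + 1) ^ (τ + 1) ≤ (3 * K j) ^ (τ + 1) :=
              Real.rpow_le_rpow hKj1 (hK3 j) hτ1.le
          _ = 3 ^ (τ + 1) * K j ^ (τ + 1) := Real.mul_rpow (by norm_num) hKj
      have hρτ : ρ (j + 1) ^ τ' ≤ ρ j ^ τ' := by
        rw [hρhalf j]
        exact Real.rpow_le_rpow (by linarith [hρpos j]) (by linarith [hρpos j]) hτ'.le
      have h2j : (2:ℝ) ^ (((j + 1 : ℕ):ℝ) + 3) = 2 * 2 ^ ((j:ℝ) + 3) := by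
        push_cast
        rw [show (j:ℝ) + 1 + 3 = 1 + ((j:ℝ) + 3) by ring,
          Real.rpow_add (by norm_num : (0:ℝ) < 2), Real.rpow_one]
      have hKjτ : 0 ≤ K j ^ (τ + 1) := Real.rpow_nonneg hKj _
      have hKj1τ : 0 ≤ K (j + 1) ^ (τ + 1) := Real.rpow_nonneg hKj1 _
      have hρτnn : 0 ≤ ρ j ^ τ' := Real.rpow_nonneg (hρpos j).le _
      have hρ1τnn : 0 ≤ ρ (j + 1) ^ τ' := Real.rpow_nonneg (hρpos (j+1)).le _
      have hEhalfnn : 0 ≤ E j ^ ((1:ℝ)/2) := Real.rpow_nonneg hEj.le _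
      rw [hFval (j + 1), hFval j, hErec j, hE32 j, h2j]
      calc 2 * 2 ^ ((j:ℝ) + 3) * K (j + 1) ^ (τ + 1) *
              (ctil * (E j ^ ((1:ℝ)/2) * E j) * αseq (j + 1) * ρ (j + 1) ^ τ')
          ≤ 2 * 2 ^ ((j:ℝ) + 3) * (3 ^ (τ + 1) * K j ^ (τ + 1)) *
              (ctil * (E j ^ ((1:ℝ)/2) * E j) * (4 / 3 * αseq j) * ρ j ^ τ') := by
            gcongr 2 * 2 ^ ((j:ℝ) + 3) * ?_ * (ctil * (E j ^ ((1:ℝ)/2) * E j) * ?_ * ?_)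
            all_goals first | exact hK1 | exact hαratio j | exact hρτ
          _ = c * E j ^ ((1:ℝ)/2) * (2 ^ ((j:ℝ) + 3) * K j ^ (τ + 1) * (E j * αseq j * ρ j ^ τ')) := by
            rw [hcdef]; ring
    -- monotonicity of E
    have hEhalfle : ∀ j, E j ^ ((1:ℝ)/2) ≤ ctil⁻¹ := fun j => by
      calc E j ^ ((1:ℝ)/2) ≤ (ctil⁻¹ ^ 2) ^ ((1:ℝ)/2) :=
            Real.rpow_le_rpow (hEpos j).le (hsmall j) (by norm_num)
        _ = ctil⁻¹ := by
            rw [← Real.rpow_natCast ctil⁻¹ 2, ← Real.rpow_mul hinv0]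
            norm_num
    have hEdec : ∀ j, E (j + 1) ≤ E j := fun j => by
      rw [hErec j, hE32 j]
      have h1 : ctil * E j ^ ((1:ℝ)/2) ≤ ctil * ctil⁻¹ :=
        mul_le_mul_of_nonneg_left (hEhalfle j) hctil0.le
      rw [mul_inv_cancel₀ hctil0.ne'] at h1
      calc ctil * (E j ^ ((1:ℝ)/2) * E j) = ctil * E j ^ ((1:ℝ)/2) * E j := by ring
        _ ≤ 1 * E j := mul_le_mul_of_nonneg_right h1 (hEpos j).le
        _ = E j := one_mul _
    have hEle0 : ∀ j, E j ≤ E 0 := by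
      intro j
      induction j with
      | zero => exact le_rfl
      | succ n ih => exact (hEdec n).trans ih
    have hFnn : ∀ j, 0 ≤ F j := fun j => by
      have h1 := hKnn j
      have h2 := (hαpos j).le
      have h3 := hEpos j
      have h4 := hρpos j
      rw [hFval j]
      positivity
    refine ⟨?_, hFstep, ?_⟩
    · -- ratio bound
      intro j
      rcases eq_or_lt_of_le (hKnn j) with h0 | h0
      · rw [← h0, div_zero]; norm_num
      · rw [div_le_iff₀ h0]
        linarith [hK3 j]
    · -- smallness propagation
      intro hE0max
      have hcE : ∀ j, c * E j ^ ((1:ℝ)/2) ≤ 1 := fun j => by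
        have hEj : E j ≤ (1 / c) ^ 2 :=
          (hEle0 j).trans (hE0max.trans (min_le_left _ _))
        have h12 : E j ^ ((1:ℝ)/2) ≤ 1 / c := by
          calc E j ^ ((1:ℝ)/2) ≤ ((1 / c) ^ 2) ^ ((1:ℝ)/2) :=
                Real.rpow_le_rpow (hEpos j).le hEj (by norm_num)
            _ = 1 / c := by
                rw [← Real.rpow_natCast (1 / c) 2, ← Real.rpow_mul (by positivity)]
                norm_num
        calc c * E j ^ ((1:ℝ)/2) ≤ c * (1 / c) :=
              mul_le_mul_of_nonneg_left h12 hcpos.le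
          _ = 1 := by field_simp
      have hF0 : F 0 ≤ α := by
        have hEmax1 : E 0 ≤ D ^ 2 := hE0max.trans (min_le_right _ _)
        have hE0half : E 0 ^ ((1:ℝ)/2) ≤ D := by
          calc E 0 ^ ((1:ℝ)/2) ≤ (D ^ 2) ^ ((1:ℝ)/2) :=
                Real.rpow_le_rpow hE0.le hEmax1 (by norm_num)
            _ = D := by
                rw [← Real.rpow_natCast D 2, ← Real.rpow_mul hDpos.le]
                norm_num
        have hρ0 : ρ 0 = ρ₀ := by
          rw [hρ]
          norm_num
        have hα0 : αseq 0 = 3 / 4 * α := by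
          have h2 : (2:ℝ) ^ (-(((0:ℕ):ℝ) + 2)) = 1 / 4 := by
            rw [show -(((0:ℕ):ℝ) + 2) = ((-2 : ℤ) : ℝ) by norm_num, Real.rpow_intCast]
            norm_num
          rw [hαs, h2]
          ring
        have hL : 0 < -Real.log (E 0) := by
          have := Real.log_neg hE0 hE01
          linarith
        have hLle : -Real.log (E 0) ≤ E 0 ^ (-s) / s := by
          have h1 : Real.log ((E 0)⁻¹) ≤ ((E 0)⁻¹) ^ s / s :=
            Real.log_le_rpow_div (by positivity) hspos
          rw [Real.log_inv, Real.inv_rpow hE0.le, ← Real.rpow_neg hE0.le] at h1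
          exact h1
        have hLpow : (-Real.log (E 0)) ^ (τ + 1) ≤ E 0 ^ (-((1:ℝ)/2)) / s ^ (τ + 1) := by
          calc (-Real.log (E 0)) ^ (τ + 1) ≤ (E 0 ^ (-s) / s) ^ (τ + 1) :=
                Real.rpow_le_rpow hL.le hLle hτ1.le
            _ = (E 0 ^ (-s)) ^ (τ + 1) / s ^ (τ + 1) :=
                Real.div_rpow (Real.rpow_nonneg hE0.le _) hspos.le _
            _ = E 0 ^ (-((1:ℝ)/2)) / s ^ (τ + 1) := by
                rw [← Real.rpow_mul hE0.le]
                congr 1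
                rw [show -s * (τ + 1) = -(s * (τ + 1)) by ring, hsval]
        have hK0 : K 0 ^ (τ + 1) = (-Real.log (E 0)) ^ (τ + 1) / ρ₀ ^ (τ + 1) := by
          rw [hKval 0, hρ0, Real.div_rpow hL.le hρ₀.le]
        have hS : (0:ℝ) < s ^ (τ + 1) := Real.rpow_pos_of_pos hspos _
        have hP : (0:ℝ) < ρ₀ ^ (τ + 1) := Real.rpow_pos_of_pos hρ₀ _
        have hQ : (0:ℝ) < ρ₀ ^ τ' := Real.rpow_pos_of_pos hρ₀ _
        have hstep : (-Real.log (E 0)) ^ (τ + 1) * E 0 ≤ E 0 ^ ((1:ℝ)/2) / s ^ (τ + 1) := by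
          have hmul := mul_le_mul_of_nonneg_right hLpow hE0.le
          have heq : E 0 ^ (-((1:ℝ)/2)) / s ^ (τ + 1) * E 0 = E 0 ^ ((1:ℝ)/2) / s ^ (τ + 1) := by
            have h12 : E 0 ^ ((1:ℝ)/2) = E 0 ^ (-((1:ℝ)/2) + 1) := by norm_num
            rw [h12, Real.rpow_add hE0, Real.rpow_one]
            ring
          rw [heq] at hmul
          exact hmul
        have key : (-Real.log (E 0)) ^ (τ + 1) * E 0 ≤ 1 / 6 * ρ₀ ^ (τ + 1) / ρ₀ ^ τ' := by
          calc (-Real.log (E 0)) ^ (τ + 1) * E 0 ≤ E 0 ^ ((1:ℝ)/2) / s ^ (τ + 1) := hstep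
            _ ≤ D / s ^ (τ + 1) := by gcongr
            _ = 1 / 6 * ρ₀ ^ (τ + 1) / ρ₀ ^ τ' := by
                rw [hDdef, Real.rpow_sub hρ₀]
                field_simp
        have h8 : (2:ℝ) ^ (((0:ℕ):ℝ) + 3) = 8 := by
          rw [show ((0:ℕ):ℝ) + 3 = ((3:ℕ):ℝ) by norm_num, Real.rpow_natCast]
          norm_num
        rw [hFval 0, h8, hK0, hα0, hρ0]
        have expand : 8 * ((-Real.log (E 0)) ^ (τ + 1) / ρ₀ ^ (τ + 1)) *
            (E 0 * (3 / 4 * α) * ρ₀ ^ τ')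
            = (-Real.log (E 0)) ^ (τ + 1) * E 0 * (6 * α * ρ₀ ^ τ' / ρ₀ ^ (τ + 1)) := by
          field_simp [hP.ne', hQ.ne']
          ring
        rw [expand]
        calc (-Real.log (E 0)) ^ (τ + 1) * E 0 * (6 * α * ρ₀ ^ τ' / ρ₀ ^ (τ + 1))
            ≤ 1 / 6 * ρ₀ ^ (τ + 1) / ρ₀ ^ τ' * (6 * α * ρ₀ ^ τ' / ρ₀ ^ (τ + 1)) := by
              apply mul_le_mul_of_nonneg_right key
              positivity
          _ = α := by
              field_simp [hP.ne', hQ.ne']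
      intro j
      induction j with
      | zero => exact hF0
      | succ n ih =>
        calc F (n + 1) ≤ c * E n ^ ((1:ℝ)/2) * F n := hFstep n
          _ ≤ 1 * F n := mul_le_mul_of_nonneg_right (hcE n) (hFnn n)
          _ = F n := one_mul _
          _ ≤ α := ih
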